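/- arXiv:1703.10662 — 2 statements merged into one kernel-verified Lean document; each statement's English description precedes it below -/
import Mathlib

section
/- Let γ > 2 and fix 0 < S_min ≤ S_max < 1. There exist positive constants C and D depending only on γ, S_min, S_max such that for every ε ∈ (0, 1/4], every S_D ∈ [S_min, S_max], and every s ∈ [0,1], one has E_{1,ε}^γ(s) ≥ C · Z_ε(s)^{2-γ} − D, where E_{1,ε}^γ(s) = s ∫_{S_D}^s Z_ε(ξ)^{-γ} dξ − ∫_{S_D}^s ξ Z_ε(ξ)^{-γ} dξ. -/
/-- The cutting function `Z(s) = min(max(s,0),1)`. -/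
noncomputable def Z (s : ℝ) : ℝ := min (max s 0) 1

/-- The regularized cutting function `Z_ε(s) = (1−2ε)Z(s) + ε`. -/
noncomputable def Zeps (ε s : ℝ) : ℝ := (1 - 2 * ε) * Z s + ε

/-- The first component of the regularized entropy with base point `S_D`:
`E_{1,ε}^γ(s) = s ∫_{S_D}^s Z_ε(ξ)^{-γ} dξ − ∫_{S_D}^s ξ Z_ε(ξ)^{-γ} dξ`. -/
noncomputable def E1 (γ ε SD s : ℝ) : ℝ :=
  s * (∫ ξ in SD..s, Zeps ε ξ ^ (-γ)) - ∫ ξ in SD..s, ξ * Zeps ε ξ ^ (-γ)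

lemma Zeps_pos' {ε : ℝ} (hε0 : 0 < ε) (hε4 : ε ≤ 1/4) (x : ℝ) : 0 < Zeps ε x := by
  have hZ0 : 0 ≤ Z x := le_min (le_max_right x 0) zero_le_one
  have : 0 ≤ (1 - 2*ε) * Z x := mul_nonneg (by linarith) hZ0
  unfold Zeps; linarith [this]

lemma frac_iden (x P Q B c γ : ℝ) (hc : c ≠ 0) (h1 : γ - 1 ≠ 0) (h2 : γ - 2 ≠ 0) :
    (x/(c*(1-γ)) * P - x*P/(c*(2-γ))) - (x/(c*(1-γ)) * Q - B/(c*(2-γ)))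
      = x*P/(c*((γ-1)*(γ-2))) + x*Q/(c*(γ-1)) - B/(c*(γ-2)) := by
  have h1' : (1:ℝ) - γ ≠ 0 := fun h => h1 (by linarith)
  have h2' : (2:ℝ) - γ ≠ 0 := fun h => h2 (by linarith)
  field_simp
  ring

lemma ftc_val (γ k ε SD s : ℝ) (hγ : 2 < γ) (hk0 : 0 < k)
    (hpos : ∀ ξ ∈ Set.uIcc SD s, 0 < k*ξ+ε) :
    ∫ ξ in SD..s, (s - ξ) * (k*ξ+ε) ^ (-γ)
      = ((k*s+ε)/(k^2*(1-γ)) * (k*s+ε)^(1-γ) - (k*s+ε)^(2-γ)/(k^2*(2-γ)))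
        - ((k*s+ε)/(k^2*(1-γ)) * (k*SD+ε)^(1-γ) - (k*SD+ε)^(2-γ)/(k^2*(2-γ))) := by
  set G : ℝ → ℝ := fun ξ =>
    (k*s+ε)/(k^2*(1-γ)) * (k*ξ+ε)^(1-γ) - (k*ξ+ε)^(2-γ)/(k^2*(2-γ)) with hGdef
  have hderiv : ∀ ξ ∈ Set.uIcc SD s, HasDerivAt G ((s - ξ) * (k*ξ+ε) ^ (-γ)) ξ := by
    intro ξ hξ
    have hx : 0 < k*ξ+ε := hpos ξ hξ
    have hx' : k*ξ+ε ≠ 0 := hx.ne'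
    have hlin : HasDerivAt (fun t : ℝ => k*t+ε) k ξ := by
      simpa using ((hasDerivAt_id ξ).const_mul k).add_const ε
    have h1 : HasDerivAt (fun t => (k*t+ε)^(1-γ)) (k * (1-γ) * (k*ξ+ε)^(1-γ-1)) ξ :=
      hlin.rpow_const (Or.inl hx')
    have h2 : HasDerivAt (fun t => (k*t+ε)^(2-γ)) (k * (2-γ) * (k*ξ+ε)^(2-γ-1)) ξ :=
      hlin.rpow_const (Or.inl hx')
    have h := (h1.const_mul ((k*s+ε)/(k^2*(1-γ)))).sub (h2.div_const (k^2*(2-γ)))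
    refine HasDerivAt.congr_deriv h ?_
    have e1 : (1:ℝ)-γ-1 = -γ := by ring
    have e2 : (2:ℝ)-γ-1 = 1-γ := by ring
    have e3 : (k*ξ+ε)^((1:ℝ)-γ) = (k*ξ+ε) * (k*ξ+ε)^(-γ) := by
      rw [show (1:ℝ)-γ = 1 + -γ by ring, Real.rpow_add hx, Real.rpow_one]
    rw [e1, e2, e3]
    have hg1 : (1:ℝ) - γ ≠ 0 := by linarith
    have hg2 : (2:ℝ) - γ ≠ 0 := by linarith
    have hk' : k ≠ 0 := hk0.ne'
    field_simp
    ring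
  have hcont : ContinuousOn (fun ξ : ℝ => (s - ξ) * (k*ξ+ε) ^ (-γ)) (Set.uIcc SD s) := by
    apply ContinuousOn.mul (by fun_prop)
    apply ContinuousOn.rpow_const (by fun_prop)
    intro x hx
    exact Or.inl (hpos x hx).ne'
  exact intervalIntegral.integral_eq_sub_of_hasDerivAt hderiv hcont.intervalIntegrable

/-- The Case 1 lower bound of the Appendix of the paper: for `γ > 2` and
`0 < S_min ≤ S_max < 1` there are constants `C, D > 0` depending only on
`γ, S_min, S_max` such that for all `ε ∈ (0,1/4]`, `S_D ∈ [S_min, S_max]` and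
`s ∈ [0,1]`, one has `E_{1,ε}^γ(s) ≥ C Z_ε(s)^{2−γ} − D`. -/
theorem E1_lower_bound_on_unit_interval
    (γ : ℝ) (hγ : 2 < γ)
    (Smin Smax : ℝ) (h0 : 0 < Smin) (h1 : Smin ≤ Smax) (h2 : Smax < 1) :
    ∃ C > (0:ℝ), ∃ D > (0:ℝ),
      ∀ ε ∈ Set.Ioc (0:ℝ) (1/4), ∀ SD ∈ Set.Icc Smin Smax, ∀ s ∈ Set.Icc (0:ℝ) 1,
        E1 γ ε SD s ≥ C * Zeps ε s ^ (2 - γ) - D := by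
  have hγ1 : (0:ℝ) < γ - 1 := by linarith
  have hγ2 : (0:ℝ) < γ - 2 := by linarith
  have hM0 : (0:ℝ) < (Smin/2) ^ (2-γ) := Real.rpow_pos_of_pos (by linarith) _
  refine ⟨1/((γ-1)*(γ-2)), by positivity, 4*((Smin/2)^(2-γ))/(γ-2),
    div_pos (by positivity) hγ2, ?_⟩
  rintro ε ⟨hε0, hε4⟩ SD ⟨hSDl, hSDu⟩ s ⟨hs0, hs1⟩
  set k : ℝ := 1 - 2*ε with hkdef
  have hk0 : 0 < k := by rw [hkdef]; linarith
  have hkh : 1/2 ≤ k := by rw [hkdef]; linarith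
  have hk1 : k ≤ 1 := by rw [hkdef]; linarith
  have hSD0 : 0 ≤ SD := le_trans h0.le hSDl
  have hSD1 : SD ≤ 1 := le_trans hSDu h2.le
  have hsub : Set.uIcc SD s ⊆ Set.Icc (0:ℝ) 1 :=
    Set.uIcc_subset_Icc ⟨hSD0, hSD1⟩ ⟨hs0, hs1⟩
  have hapos : ∀ ξ ∈ Set.Icc (0:ℝ) 1, 0 < k * ξ + ε := by
    intro ξ hξ
    have := hξ.1
    nlinarith
  have has0 : 0 < k * s + ε := hapos s ⟨hs0, hs1⟩
  have haSD0 : 0 < k * SD + ε := hapos SD ⟨hSD0, hSD1⟩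
  have haSD : Smin/2 ≤ k * SD + ε := by nlinarith
  have hZeq : ∀ ξ ∈ Set.Icc (0:ℝ) 1, Zeps ε ξ = k * ξ + ε := by
    intro ξ hξ
    have hZ : Z ξ = ξ := by rw [Z, max_eq_left hξ.1, min_eq_left hξ.2]
    rw [Zeps, hZ, hkdef]
  -- continuity & integrability
  have hZc : Continuous (fun ξ : ℝ => Zeps ε ξ ^ (-γ)) := by
    have hc : Continuous (Zeps ε) := by
      unfold Zeps Z
      fun_prop
    exact hc.rpow_const (fun x => Or.inl (Zeps_pos' hε0 hε4 x).ne')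
  have hint1 : IntervalIntegrable (fun ξ : ℝ => Zeps ε ξ ^ (-γ)) MeasureTheory.volume SD s :=
    hZc.intervalIntegrable SD s
  have hint2 : IntervalIntegrable (fun ξ : ℝ => ξ * Zeps ε ξ ^ (-γ)) MeasureTheory.volume SD s :=
    (continuous_id.mul hZc).intervalIntegrable SD s
  -- E1 as a single integral, then the FTC value
  have hval : E1 γ ε SD s
      = ((k*s+ε)/(k^2*(1-γ)) * (k*s+ε)^((1:ℝ)-γ) - (k*s+ε)^((2:ℝ)-γ)/(k^2*(2-γ)))
        - ((k*s+ε)/(k^2*(1-γ)) * (k*SD+ε)^((1:ℝ)-γ) - (k*SD+ε)^((2:ℝ)-γ)/(k^2*(2-γ))) := by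
    have hE1 : E1 γ ε SD s = ∫ ξ in SD..s, (s - ξ) * Zeps ε ξ ^ (-γ) := by
      rw [E1, ← intervalIntegral.integral_const_mul,
        ← intervalIntegral.integral_sub (hint1.const_mul s) hint2]
      apply intervalIntegral.integral_congr
      intro ξ _
      simp only
      ring
    have hE2 : E1 γ ε SD s = ∫ ξ in SD..s, (s - ξ) * (k*ξ+ε) ^ (-γ) := by
      rw [hE1]
      apply intervalIntegral.integral_congr
      intro ξ hξ
      simp only
      rw [hZeq ξ (hsub hξ)]
    rw [hE2]
    exact ftc_val γ k ε SD s hγ hk0 (fun ξ hξ => hapos ξ (hsub hξ))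
  -- abbreviations
  have hAP : (k*s+ε)^((2:ℝ)-γ) = (k*s+ε) * (k*s+ε)^((1:ℝ)-γ) := by
    rw [show (2:ℝ)-γ = 1 + (1-γ) by ring, Real.rpow_add has0, Real.rpow_one]
  set P : ℝ := (k*s+ε)^((1:ℝ)-γ) with hPdef
  set Q : ℝ := (k*SD+ε)^((1:ℝ)-γ) with hQdef
  set B : ℝ := (k*SD+ε)^((2:ℝ)-γ) with hBdef
  have hP0 : 0 ≤ P := (Real.rpow_pos_of_pos has0 _).le
  have hQ0 : 0 ≤ Q := (Real.rpow_pos_of_pos haSD0 _).le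
  have hBM : B ≤ (Smin/2)^(2-γ) :=
    Real.rpow_le_rpow_of_nonpos (by linarith) haSD (by linarith)
  have hc0 : k^2 ≠ 0 := (pow_pos hk0 2).ne'
  have hiden : E1 γ ε SD s
      = (k*s+ε)*P/(k^2*((γ-1)*(γ-2))) + (k*s+ε)*Q/(k^2*(γ-1)) - B/(k^2*(γ-2)) := by
    rw [hval, hAP]
    exact frac_iden (k*s+ε) P Q B (k^2) γ hc0 hγ1.ne' hγ2.ne'
  -- bounds
  have hcc : (0:ℝ) < (γ-1)*(γ-2) := mul_pos hγ1 hγ2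
  have hk20 : (0:ℝ) < k^2 := pow_pos hk0 2
  have hksq : k^2 ≤ 1 := by
    rw [pow_two]
    nlinarith only [hk0, hk1]
  have hB0 : 0 ≤ B := (Real.rpow_pos_of_pos haSD0 _).le
  have t1 : (k*s+ε)*P/((γ-1)*(γ-2)) ≤ (k*s+ε)*P/(k^2*((γ-1)*(γ-2))) :=
    div_le_div_of_nonneg_left (mul_nonneg has0.le hP0) (mul_pos hk20 hcc)
      (mul_le_of_le_one_left hcc.le hksq)
  have t2 : 0 ≤ (k*s+ε)*Q/(k^2*(γ-1)) :=
    div_nonneg (mul_nonneg has0.le hQ0) (mul_pos hk20 hγ1).le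
  have t3 : B/(k^2*(γ-2)) ≤ 4*((Smin/2)^(2-γ))/(γ-2) := by
    have h4 : (1/4:ℝ) ≤ k^2 := by
      rw [show (1/4:ℝ) = (1/2)*(1/2) by norm_num, pow_two]
      exact mul_le_mul hkh hkh (by norm_num) hk0.le
    have h14 : (1/4:ℝ)*(γ-2) ≤ k^2*(γ-2) := mul_le_mul_of_nonneg_right h4 hγ2.le
    calc B/(k^2*(γ-2)) ≤ (Smin/2)^(2-γ)/((1/4)*(γ-2)) :=
          div_le_div₀ hM0.le hBM (by linarith) h14
      _ = (Smin/2)^(2-γ) * ((1/4)*(γ-2))⁻¹ := div_eq_mul_inv _ _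
      _ = 4*((Smin/2)^(2-γ))/(γ-2) := by
          rw [mul_inv, show ((1:ℝ)/4)⁻¹ = 4 by norm_num]
          ring
  have hZs : Zeps ε s ^ (2-γ) = (k*s+ε) * P := by
    rw [hZeq s ⟨hs0, hs1⟩, ← hAP]
  have hfrac : 1/((γ-1)*(γ-2)) * ((k*s+ε)*P) = (k*s+ε)*P/((γ-1)*(γ-2)) := by ring
  rw [ge_iff_le, hZs, hiden, hfrac]
  linarith only [t1, t2, t3]
end

section
/- Let λ > 2 and fix 0 < S_min ≤ S_max < 1. There exists a positive constant D depending only on λ, S_min, S_max such that for every ε ∈ (0, 1/4], every S_D ∈ [S_min, S_max], and every s > 1: E_{2,ε}^λ(s) ≥ (s−1)²/(2ε^λ) + ε^{2-λ} / ( (1−2ε)² (λ−1)(λ−2) ) − D, where E_{2,ε}^λ(s) = s ∫_{S_D}^s (1 − Z_ε(ξ))^{-λ} dξ − ∫_{S_D}^s ξ (1 − Z_ε(ξ))^{-λ} dξ. -/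
/-- The second component of the regularized entropy with base point `S_D`:
`E_{2,ε}^λ(s) = s ∫_{S_D}^s (1−Z_ε(ξ))^{-λ} dξ − ∫_{S_D}^s ξ (1−Z_ε(ξ))^{-λ} dξ`. -/
noncomputable def E2 (lam ε SD s : ℝ) : ℝ :=
  s * (∫ ξ in SD..s, (1 - Zeps ε ξ) ^ (-lam)) -
    ∫ ξ in SD..s, ξ * (1 - Zeps ε ξ) ^ (-lam)

lemma Z_mem (x : ℝ) : Z x ∈ Set.Icc (0:ℝ) 1 := by
  constructor
  · exact le_min (le_max_right _ _) zero_le_one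
  · exact min_le_right _ _

lemma Z_of_ge_one {x : ℝ} (hx : 1 ≤ x) : Z x = 1 := by
  unfold Z
  rw [max_eq_left (by linarith), min_eq_right hx]

lemma Z_of_mem {x : ℝ} (h0 : 0 ≤ x) (h1 : x ≤ 1) : Z x = x := by
  unfold Z
  rw [max_eq_left h0, min_eq_left h1]

lemma Z_continuous : Continuous Z :=
  (continuous_id.max continuous_const).min continuous_const

lemma one_sub_Zeps_ge {ε : ℝ} (hε : 0 < ε) (hε' : ε ≤ 1/4) (x : ℝ) :
    ε ≤ 1 - Zeps ε x := by
  have h := Z_mem x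
  unfold Zeps
  nlinarith [h.1, h.2]

/-- The Case 3 lower bound of the Appendix of the paper: for `λ > 2` and
`0 < S_min ≤ S_max < 1` there is a constant `D > 0` depending only on
`λ, S_min, S_max` such that for all `ε ∈ (0,1/4]`, `S_D ∈ [S_min, S_max]` and `s > 1`,
`E_{2,ε}^λ(s) ≥ (s−1)²/(2ε^λ) + ε^{2−λ}/((1−2ε)²(λ−1)(λ−2)) − D`. -/
theorem E2_lower_bound_above_one
    (lam : ℝ) (hlam : 2 < lam)
    (Smin Smax : ℝ) (h0 : 0 < Smin) (h1 : Smin ≤ Smax) (h2 : Smax < 1) :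
    ∃ D > (0:ℝ),
      ∀ ε ∈ Set.Ioc (0:ℝ) (1/4), ∀ SD ∈ Set.Icc Smin Smax, ∀ s : ℝ, 1 < s →
        E2 lam ε SD s ≥
          (s - 1) ^ 2 / (2 * ε ^ lam) +
            ε ^ (2 - lam) / ((1 - 2 * ε) ^ 2 * ((lam - 1) * (lam - 2))) - D := by
  have h1S : (0:ℝ) < 1 - Smax := by linarith
  refine ⟨(2:ℝ) ^ lam * (1 - Smax) ^ (2 - lam) / (lam - 2), ?_, ?_⟩
  · apply div_pos
    · exact mul_pos (Real.rpow_pos_of_pos two_pos _) (Real.rpow_pos_of_pos h1S _)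
    · linarith
  intro ε hε SD hSD s hs
  obtain ⟨hε1, hε2⟩ := hε
  obtain ⟨hSD1, hSD2⟩ := hSD
  have hSDpos : 0 < SD := lt_of_lt_of_le h0 hSD1
  have hSDlt1 : SD < 1 := lt_of_le_of_lt hSD2 h2
  set a : ℝ := 1 - 2 * ε with ha_def
  have ha : (1:ℝ)/2 ≤ a := by simp only [ha_def]; linarith
  have hapos : (0:ℝ) < a := by linarith
  set c : ℝ := (1 - ε) / a with hc_def
  have hac : a * c = 1 - ε := by
    rw [hc_def]; field_simp
  have hc1 : 1 < c := by
    rw [hc_def, lt_div_iff₀ hapos]; simp only [ha_def]; linarith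
  have hcm1 : c - 1 = ε / a := by
    field_simp [hc_def]; linarith
  -- the integrand
  set f : ℝ → ℝ := fun ξ => (1 - Zeps ε ξ) ^ (-lam) with hf_def
  have hfpos : ∀ ξ, 0 < f ξ :=
    fun ξ => Real.rpow_pos_of_pos (lt_of_lt_of_le hε1 (one_sub_Zeps_ge hε1 hε2 ξ)) _
  have hf_cont : Continuous f := by
    apply Continuous.rpow_const
    · exact continuous_const.sub ((continuous_const.mul Z_continuous).add continuous_const)
    · intro x
      exact Or.inl (ne_of_gt (lt_of_lt_of_le hε1 (one_sub_Zeps_ge hε1 hε2 x)))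
  have hint : ∀ (g : ℝ → ℝ), Continuous g → ∀ u v : ℝ,
      IntervalIntegrable (fun ξ => g ξ * f ξ) MeasureTheory.volume u v :=
    fun g hg u v => (hg.mul hf_cont).intervalIntegrable u v
  -- E2 as a single integral
  have hIs : IntervalIntegrable (fun ξ => s * f ξ) MeasureTheory.volume SD s :=
    (continuous_const.mul hf_cont).intervalIntegrable _ _
  have hIx : IntervalIntegrable (fun ξ => ξ * f ξ) MeasureTheory.volume SD s :=
    (continuous_id.mul hf_cont).intervalIntegrable _ _
  have hE : E2 lam ε SD s = ∫ ξ in SD..s, (s - ξ) * f ξ := by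
    unfold E2
    rw [← intervalIntegral.integral_const_mul,
      ← intervalIntegral.integral_sub hIs hIx]
    apply intervalIntegral.integral_congr
    intro ξ _
    ring
  -- split at 1
  have hsplit : ∫ ξ in SD..s, (s - ξ) * f ξ =
      (∫ ξ in SD..1, (s - ξ) * f ξ) + ∫ ξ in (1:ℝ)..s, (s - ξ) * f ξ :=
    (intervalIntegral.integral_add_adjacent_intervals
      (hint _ (continuous_const.sub continuous_id) SD 1)
      (hint _ (continuous_const.sub continuous_id) 1 s)).symm
  -- the part on [1,s]
  have hεlam : (0:ℝ) < ε ^ lam := Real.rpow_pos_of_pos hε1 _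
  have h2int : ∫ ξ in (1:ℝ)..s, (s - ξ) * f ξ = (s - 1) ^ 2 / (2 * ε ^ lam) := by
    have hcg : ∀ ξ ∈ Set.uIcc (1:ℝ) s, (s - ξ) * f ξ = (s - ξ) * ε ^ (-lam) := by
      intro ξ hξ
      rw [Set.uIcc_of_le hs.le] at hξ
      have hz : Z ξ = 1 := Z_of_ge_one hξ.1
      have : 1 - Zeps ε ξ = ε := by unfold Zeps; rw [hz]; ring
      simp only [hf_def, this]
    rw [intervalIntegral.integral_congr hcg, intervalIntegral.integral_mul_const]
    have hid : ∫ ξ in (1:ℝ)..s, (s - ξ) = (s - 1) ^ 2 / 2 := by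
      rw [intervalIntegral.integral_sub intervalIntegrable_const intervalIntegral.intervalIntegrable_id,
        intervalIntegral.integral_const, integral_id]
      simp only [smul_eq_mul]
      ring
    rw [hid, Real.rpow_neg hε1.le]
    field_simp
  -- the part on [SD,1]: lower bound by replacing s by 1
  have h3 : ∫ ξ in SD..1, (1 - ξ) * f ξ ≤ ∫ ξ in SD..1, (s - ξ) * f ξ := by
    apply intervalIntegral.integral_mono_on hSDlt1.le
      (hint _ (continuous_const.sub continuous_id) SD 1)
      (hint _ (continuous_const.sub continuous_id) SD 1)
    intro ξ _
    have := hfpos ξ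
    show (1 - ξ) * f ξ ≤ (s - ξ) * f ξ
    nlinarith
  -- antiderivative
  set G : ℝ → ℝ := fun ξ =>
    a ^ (-lam) * ((c - ξ) ^ (2 - lam) / (lam - 2) - (c - 1) * (c - ξ) ^ (1 - lam) / (lam - 1))
    with hG_def
  have hFTC : ∫ ξ in SD..1, (1 - ξ) * f ξ = G 1 - G SD := by
    apply intervalIntegral.integral_eq_sub_of_hasDerivAt
    · intro ξ hξ
      rw [Set.uIcc_of_le hSDlt1.le] at hξ
      have hξ0 : 0 ≤ ξ := le_trans hSDpos.le hξ.1
      have hξ1 : ξ ≤ 1 := hξ.2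
      have hcx : 0 < c - ξ := by linarith
      have hd1 : HasDerivAt (fun x : ℝ => c - x) (-1) ξ := (hasDerivAt_id ξ).const_sub c
      have hd2 : HasDerivAt (fun x : ℝ => (c - x) ^ (2 - lam))
          (-1 * (2 - lam) * (c - ξ) ^ (2 - lam - 1)) ξ :=
        hd1.rpow_const (Or.inl (ne_of_gt hcx))
      have hd3 : HasDerivAt (fun x : ℝ => (c - x) ^ (1 - lam))
          (-1 * (1 - lam) * (c - ξ) ^ (1 - lam - 1)) ξ :=
        hd1.rpow_const (Or.inl (ne_of_gt hcx))
      have hdG : HasDerivAt G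
          (a ^ (-lam) * (-1 * (2 - lam) * (c - ξ) ^ (2 - lam - 1) / (lam - 2) -
            (c - 1) * (-1 * (1 - lam) * (c - ξ) ^ (1 - lam - 1)) / (lam - 1))) ξ := by
        exact ((hd2.div_const (lam - 2)).sub
          (((hd3.const_mul (c - 1))).div_const (lam - 1))).const_mul _
      refine hdG.congr_deriv ?_
      have hz : Z ξ = ξ := Z_of_mem hξ0 hξ1
      have hone : 1 - Zeps ε ξ = a * (c - ξ) := by
        unfold Zeps; rw [hz]; rw [mul_sub, hac]; ring
      have hmul : f ξ = a ^ (-lam) * (c - ξ) ^ (-lam) := by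
        simp only [hf_def, hone]
        exact Real.mul_rpow hapos.le hcx.le
      have hsplit1 : (c - ξ) ^ (2 - lam - 1) = (c - ξ) * (c - ξ) ^ (-lam) := by
        rw [show (2 - lam - 1 : ℝ) = 1 + (-lam) by ring, Real.rpow_add hcx, Real.rpow_one]
      have hsplit2 : (c - ξ) ^ (1 - lam - 1) = (c - ξ) ^ (-lam) := by
        norm_num
      rw [hmul, hsplit1, hsplit2]
      have hl2 : lam - 2 ≠ 0 := by linarith
      have hl1 : lam - 1 ≠ 0 := by linarith
      field_simp
      ring
    · exact hint _ (continuous_const.sub continuous_id) SD 1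
  -- value of G at 1
  have hG1 : G 1 = ε ^ (2 - lam) / (a ^ 2 * ((lam - 1) * (lam - 2))) := by
    have hεa : (0:ℝ) < ε / a := div_pos hε1 hapos
    have h11 : (c - 1) * (c - 1) ^ (1 - lam) = (c - 1) ^ (2 - lam) := by
      rw [hcm1]
      rw [show (2 - lam : ℝ) = 1 + (1 - lam) by ring, Real.rpow_add hεa, Real.rpow_one]
    have hdiv : (c - 1) ^ (2 - lam) = ε ^ (2 - lam) / a ^ (2 - lam) := by
      rw [hcm1, Real.div_rpow hε1.le hapos.le]
    have haa : a ^ (-lam) / a ^ (2 - lam) = (a ^ 2)⁻¹ := by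
      rw [← Real.rpow_sub hapos]
      rw [show (-lam - (2 - lam) : ℝ) = -(2:ℕ) by push_cast; ring]
      rw [Real.rpow_neg hapos.le, Real.rpow_natCast]
    have hl2 : lam - 2 ≠ 0 := by linarith
    have hl1 : lam - 1 ≠ 0 := by linarith
    have ha2 : (a:ℝ) ^ 2 ≠ 0 := pow_ne_zero 2 (ne_of_gt hapos)
    have halam : a ^ (2 - lam) ≠ 0 := ne_of_gt (Real.rpow_pos_of_pos hapos _)
    simp only [hG_def]
    rw [h11, hdiv]
    rw [show a ^ (-lam) * (ε ^ (2 - lam) / a ^ (2 - lam) / (lam - 2) -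
        ε ^ (2 - lam) / a ^ (2 - lam) / (lam - 1)) =
        (a ^ (-lam) / a ^ (2 - lam)) * (ε ^ (2 - lam) / (lam - 2) -
        ε ^ (2 - lam) / (lam - 1)) by field_simp]
    rw [haa]
    field_simp
    ring
  -- bound on G SD
  have hGSD : G SD ≤ (2:ℝ) ^ lam * (1 - Smax) ^ (2 - lam) / (lam - 2) := by
    have hcSD : 0 < c - SD := by linarith
    have hterm2 : 0 ≤ (c - 1) * (c - SD) ^ (1 - lam) / (lam - 1) := by
      apply div_nonneg _ (by linarith)
      exact mul_nonneg (by linarith) (Real.rpow_pos_of_pos hcSD _).le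
    have hb1 : a ^ (-lam) ≤ (2:ℝ) ^ lam := by
      rw [Real.rpow_neg hapos.le]
      rw [show (2:ℝ) ^ lam = ((1/2:ℝ) ^ lam)⁻¹ by
        rw [show (1/2 : ℝ) = 2⁻¹ by norm_num, Real.inv_rpow (by norm_num), inv_inv]]
      apply inv_anti₀ (Real.rpow_pos_of_pos (by norm_num) _)
      exact Real.rpow_le_rpow (by norm_num) ha (by linarith)
    have hb2 : (c - SD) ^ (2 - lam) ≤ (1 - Smax) ^ (2 - lam) := by
      have hle : 1 - Smax ≤ c - SD := by linarith
      rw [show (2 - lam : ℝ) = -(lam - 2) by ring, Real.rpow_neg h1S.le,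
        Real.rpow_neg hcSD.le]
      apply inv_anti₀ (Real.rpow_pos_of_pos h1S _)
      exact Real.rpow_le_rpow h1S.le hle (by linarith)
    have hmain : G SD ≤ a ^ (-lam) * (c - SD) ^ (2 - lam) / (lam - 2) := by
      have hGeq : G SD = a ^ (-lam) * (c - SD) ^ (2 - lam) / (lam - 2) -
          a ^ (-lam) * ((c - 1) * (c - SD) ^ (1 - lam) / (lam - 1)) := by
        simp only [hG_def]; ring
      rw [hGeq]
      linarith [mul_nonneg (Real.rpow_pos_of_pos hapos (-lam)).le hterm2]
    calc G SD ≤ a ^ (-lam) * (c - SD) ^ (2 - lam) / (lam - 2) := hmain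
      _ ≤ (2:ℝ) ^ lam * (1 - Smax) ^ (2 - lam) / (lam - 2) := by
          apply (div_le_div_iff_of_pos_right (by linarith : (0:ℝ) < lam - 2)).mpr
          exact mul_le_mul hb1 hb2 (Real.rpow_pos_of_pos hcSD _).le
            (Real.rpow_pos_of_pos two_pos _).le
  -- assemble
  have hlow : G 1 - G SD ≤ ∫ ξ in SD..1, (s - ξ) * f ξ := hFTC ▸ h3
  rw [hG1] at hlow
  rw [ge_iff_le, ← sub_nonneg]
  rw [hE, hsplit, h2int]
  linarith [hGSD, hlow]
end
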